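/- Let G be an algebraic group with a character χ: G → ℂ* that is nontrivial on the connected component of the identity, B a smooth variety, and f: G × B → ℂ a function with f(g,b) = χ(g) f(1,b). Set f̄ = f(1,−). Then the critical locus (as a scheme) Z(df) equals pr_B^{-1}(Z(df̄) ∩ Z(f̄)). -/

import Mathlib

open Manifold

open Set

/-- Translation invariance of the vanishing of the differential of a smooth character:
if the differential of `χ` vanishes at one point, it vanishes at every point. -/
theorem mfderiv_char_eq_zero_of_eq_zero
    {EG : Type*} [NormedAddCommGroup EG] [NormedSpace ℂ EG]
    {HG : Type*} [TopologicalSpace HG] {IG : ModelWithCorners ℂ EG HG}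
    {G : Type*} [TopologicalSpace G] [ChartedSpace HG G] [Group G] [IsTopologicalGroup G]
    [IsManifold IG (⊤ : ℕ∞) G] [LieGroup IG (⊤ : ℕ∞) G]
    (χ : G →* ℂˣ) (hχ : ContMDiff IG 𝓘(ℂ, ℂ) (⊤ : ℕ∞) fun g : G => (χ g : ℂ))
    {x : G} (hx : mfderiv IG 𝓘(ℂ, ℂ) (fun g : G => (χ g : ℂ)) x = 0) (y : G) :
    mfderiv IG 𝓘(ℂ, ℂ) (fun g : G => (χ g : ℂ)) y = 0 := by
  have hx' : HasMFDerivAt IG 𝓘(ℂ, ℂ) (fun g : G => (χ g : ℂ)) x 0 := by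
    have := ((hχ x).mdifferentiableAt (by simp)).hasMFDerivAt
    rwa [hx] at this
  have hL : HasMFDerivAt IG IG (fun z : G => (x * y⁻¹) * z) y
      (mfderiv IG IG (fun z : G => (x * y⁻¹) * z) y) := by
    have h : ContMDiff IG IG (⊤ : ℕ∞) (fun z : G => (x * y⁻¹) * z) :=
      contMDiff_mul_left (I := IG) (G := G) (n := (⊤ : ℕ∞)) (a := x * y⁻¹)
    exact ((h y).mdifferentiableAt (by simp)).hasMFDerivAt
  have hx'' : HasMFDerivAt IG 𝓘(ℂ, ℂ) (fun g : G => (χ g : ℂ)) ((x * y⁻¹) * y) 0 := by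
    rw [inv_mul_cancel_right]
    exact hx'
  have hcomp := HasMFDerivAt.comp (x := y) (f := fun z : G => (x * y⁻¹) * z) hx'' hL
  have hsmul := hcomp.const_smul ((χ (y * x⁻¹) : ℂ))
  have hfun : ((χ (y * x⁻¹) : ℂ) •
      ((fun g : G => (χ g : ℂ)) ∘ (fun z : G => (x * y⁻¹) * z))) = fun g : G => (χ g : ℂ) := by
    funext z
    simp only [Pi.smul_apply, Function.comp_apply, smul_eq_mul]
    rw [← Units.val_mul, ← map_mul]
    congr 1
    group
  rw [hfun] at hsmul
  rw [hsmul.mfderiv]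
  ext v
  change (_ : ℂ) • (0 : ℂ) = 0
  simp

/-- A smooth character that is nontrivial on the connected component of the identity has
nonvanishing differential at the identity. -/
theorem mfderiv_char_one_ne_zero
    {EG : Type*} [NormedAddCommGroup EG] [NormedSpace ℂ EG]
    {HG : Type*} [TopologicalSpace HG] {IG : ModelWithCorners ℂ EG HG}
    {G : Type*} [TopologicalSpace G] [ChartedSpace HG G] [Group G] [IsTopologicalGroup G]
    [IsManifold IG (⊤ : ℕ∞) G] [LieGroup IG (⊤ : ℕ∞) G]
    (χ : G →* ℂˣ) (hχ : ContMDiff IG 𝓘(ℂ, ℂ) (⊤ : ℕ∞) fun g : G => (χ g : ℂ))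
    (hnontriv : ∃ g ∈ connectedComponent (1 : G), χ g ≠ 1) :
    mfderiv IG 𝓘(ℂ, ℂ) (fun g : G => (χ g : ℂ)) (1 : G) ≠ 0 := by
  intro h0
  have hall : ∀ x : G, mfderiv IG 𝓘(ℂ, ℂ) (fun g : G => (χ g : ℂ)) x = 0 :=
    fun x => mfderiv_char_eq_zero_of_eq_zero χ hχ h0 x
  set e := extChartAt IG (1 : G) with he
  -- find a ball inside the target of the extended chart
  have hOopen : IsOpen (IG.symm ⁻¹' (chartAt HG (1 : G)).target) :=
    (chartAt HG (1 : G)).open_target.preimage IG.continuous_symm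
  have he1T : e (1 : G) ∈ e.target := mem_extChartAt_target (1 : G)
  rw [he, extChartAt_target] at he1T
  have hclo : e (1 : G) ∈ closure (interior (range IG)) :=
    IG.range_subset_closure_interior he1T.2
  have hne : ((IG.symm ⁻¹' (chartAt HG (1 : G)).target) ∩ interior (range IG)).Nonempty :=
    mem_closure_iff.mp hclo _ hOopen he1T.1
  obtain ⟨y₀, hy₀O, hy₀i⟩ := hne
  have hy₀T : y₀ ∈ e.target := by
    rw [he, extChartAt_target]
    exact ⟨hy₀O, interior_subset hy₀i⟩
  have hUopen : IsOpen ((IG.symm ⁻¹' (chartAt HG (1 : G)).target) ∩ interior (range IG)) :=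
    hOopen.inter isOpen_interior
  obtain ⟨r, hr0, hball⟩ := Metric.isOpen_iff.mp hUopen y₀ ⟨hy₀O, hy₀i⟩
  have hballT : Metric.ball y₀ r ⊆ e.target := by
    intro z hz
    rw [he, extChartAt_target]
    exact ⟨(hball hz).1, interior_subset (hball hz).2⟩
  -- the function read in the chart is constant on the ball
  have hdF : ∀ z ∈ Metric.ball y₀ r,
      HasFDerivAt (fun w : EG => (χ (e.symm w) : ℂ)) (0 : EG →L[ℂ] ℂ) z := by
    intro z hz
    have h1 : ContMDiffWithinAt 𝓘(ℂ, EG) IG (⊤ : ℕ∞) e.symm e.target z :=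
      contMDiffOn_extChartAt_symm (1 : G) z (hballT hz)
    have h2 : e.target ∈ nhds z :=
      Filter.mem_of_superset (Metric.isOpen_ball.mem_nhds hz) hballT
    have hsm : MDifferentiableAt 𝓘(ℂ, EG) IG e.symm z :=
      (h1.mdifferentiableWithinAt (by simp)).mdifferentiableAt h2
    have hχz : HasMFDerivAt IG 𝓘(ℂ, ℂ) (fun g : G => (χ g : ℂ)) (e.symm z) 0 := by
      have := ((hχ (e.symm z)).mdifferentiableAt (by simp)).hasMFDerivAt
      rwa [hall (e.symm z)] at this
    have hcomp := HasMFDerivAt.comp (x := z) (f := e.symm) hχz hsm.hasMFDerivAt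
    have hC : HasMFDerivAt 𝓘(ℂ, EG) 𝓘(ℂ, ℂ) (fun w : EG => (χ (e.symm w) : ℂ)) z 0 := by
      have hzc : ((0 : TangentSpace IG (e.symm z) →L[ℂ]
            TangentSpace 𝓘(ℂ, ℂ) ((χ (e.symm z) : ℂ))).comp
          (mfderiv 𝓘(ℂ, EG) IG e.symm z)) = 0 := ContinuousLinearMap.zero_comp _
      rw [hzc] at hcomp
      exact hcomp
    exact hasMFDerivAt_iff_hasFDerivAt.mp hC
  have hFconst : ∀ z ∈ Metric.ball y₀ r, (χ (e.symm z) : ℂ) = (χ (e.symm y₀) : ℂ) := by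
    intro z hz
    refine Convex.is_const_of_fderivWithin_eq_zero
      (f := fun w : EG => (χ (e.symm w) : ℂ)) (convex_ball y₀ r)
      (fun w hw => ((hdF w hw).differentiableAt).differentiableWithinAt) ?_ hz
      (Metric.mem_ball_self hr0)
    intro w hw
    rw [fderivWithin_of_isOpen Metric.isOpen_ball hw]
    exact (hdF w hw).fderiv
  -- deduce that the kernel of `χ` is a neighborhood of 1
  set x₀ := e.symm y₀ with hx₀
  have hx₀src : x₀ ∈ e.source := e.map_target hy₀T
  have hex₀ : e x₀ = y₀ := e.right_inv hy₀T
  have hker_nhds : {w : G | χ w = 1} ∈ nhds (1 : G) := by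
    have h2 : ContinuousAt e (x₀ * 1) := by
      rw [mul_one]
      exact continuousAt_extChartAt' hx₀src
    have hcont : ContinuousAt (fun w : G => e (x₀ * w)) 1 :=
      h2.comp ((continuous_mul_left x₀).continuousAt)
    have hev1 : ∀ᶠ w in nhds (1 : G), e (x₀ * w) ∈ Metric.ball y₀ r := by
      apply hcont.preimage_mem_nhds
      rw [mul_one, hex₀]
      exact Metric.ball_mem_nhds _ hr0
    have hev2 : ∀ᶠ w in nhds (1 : G), x₀ * w ∈ e.source := by
      apply ((continuous_mul_left x₀).continuousAt).preimage_mem_nhds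
      rw [mul_one]
      exact (isOpen_extChartAt_source _).mem_nhds hx₀src
    filter_upwards [hev1, hev2] with w hw1 hw2
    have hcw : (χ (e.symm (e (x₀ * w))) : ℂ) = (χ x₀ : ℂ) := hFconst _ hw1
    rw [e.left_inv hw2] at hcw
    have hcancel : (χ x₀ : ℂ) * (χ w : ℂ) = (χ x₀ : ℂ) * 1 := by
      rw [mul_one, ← Units.val_mul, ← map_mul]
      exact hcw
    have : (χ w : ℂ) = 1 := mul_left_cancel₀ (Units.ne_zero (χ x₀)) hcancel
    exact Units.ext (by simpa using this)
  have hker_set : ((χ.ker : Subgroup G) : Set G) = {w : G | χ w = 1} := by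
    ext w
    simp [MonoidHom.mem_ker]
  have hopen : IsOpen ((χ.ker : Subgroup G) : Set G) := by
    apply Subgroup.isOpen_of_mem_nhds
    rw [hker_set]
    exact hker_nhds
  have hclosed : IsClosed ((χ.ker : Subgroup G) : Set G) :=
    Subgroup.isClosed_of_isOpen _ hopen
  have hsub : connectedComponent (1 : G) ⊆ ((χ.ker : Subgroup G) : Set G) :=
    IsClopen.connectedComponent_subset ⟨hclosed, hopen⟩ (by simp [MonoidHom.mem_ker])
  obtain ⟨g₀, hg₀K, hg₀⟩ := hnontriv
  exact hg₀ (by simpa [MonoidHom.mem_ker] using hsub hg₀K)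

/-- Let `G` be a (complex Lie / algebraic) group with a character `χ : G → ℂ*` nontrivial on the
connected component of the identity, `B` a smooth variety, and `f : G × B → ℂ` a semi-invariant:
`f (g, b) = χ g * f (1, b)`.  Setting `f̄ = f (1, ·)`, the critical locus `Z(df)` equals
`pr_B⁻¹(Z(df̄) ∩ Z(f̄))`. -/
theorem critical_locus_of_semiinvariant
    {EG : Type*} [NormedAddCommGroup EG] [NormedSpace ℂ EG]
    {HG : Type*} [TopologicalSpace HG] (IG : ModelWithCorners ℂ EG HG)
    {EB : Type*} [NormedAddCommGroup EB] [NormedSpace ℂ EB]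
    {HB : Type*} [TopologicalSpace HB] (IB : ModelWithCorners ℂ EB HB)
    {G : Type*} [TopologicalSpace G] [ChartedSpace HG G] [Group G] [IsTopologicalGroup G]
    [IsManifold IG (⊤ : ℕ∞) G] [LieGroup IG (⊤ : ℕ∞) G]
    {B : Type*} [TopologicalSpace B] [ChartedSpace HB B] [IsManifold IB (⊤ : ℕ∞) B]
    (χ : G →* ℂˣ) (hχ : ContMDiff IG 𝓘(ℂ, ℂ) (⊤ : ℕ∞) fun g : G => (χ g : ℂ))
    (hnontriv : ∃ g ∈ connectedComponent (1 : G), χ g ≠ 1)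
    (f : G × B → ℂ) (hf : ContMDiff (IG.prod IB) 𝓘(ℂ, ℂ) (⊤ : ℕ∞) f)
    (hsemi : ∀ (g : G) (b : B), f (g, b) = (χ g : ℂ) * f (1, b)) :
    {p : G × B | mfderiv (IG.prod IB) 𝓘(ℂ, ℂ) f p = 0}
      = Prod.snd ⁻¹'
        {b : B | mfderiv IB 𝓘(ℂ, ℂ) (fun b : B => f (1, b)) b = 0 ∧ f (1, b) = 0} := by
  have hfbar : ContMDiff IB 𝓘(ℂ, ℂ) (⊤ : ℕ∞) (fun b : B => f (1, b)) := by
    have hone : ContMDiff IB (IG.prod IB) (⊤ : ℕ∞) (fun b : B => ((1 : G), b)) :=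
      ContMDiff.prodMk contMDiff_const contMDiff_id
    exact hf.comp hone
  ext p
  obtain ⟨g, b⟩ := p
  simp only [Set.mem_setOf_eq, Set.mem_preimage]
  -- product rule expression for the differential of `f`
  have hφ : HasMFDerivAt (IG.prod IB) 𝓘(ℂ, ℂ)
      ((fun g : G => (χ g : ℂ)) ∘ Prod.fst) (g, b)
      ((mfderiv IG 𝓘(ℂ, ℂ) (fun g : G => (χ g : ℂ)) g).comp
        (ContinuousLinearMap.fst ℂ (TangentSpace IG g) (TangentSpace IB b))) :=
    HasMFDerivAt.comp (x := (g, b)) (f := Prod.fst)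
      ((hχ g).mdifferentiableAt (by simp)).hasMFDerivAt (hasMFDerivAt_fst (g, b))
  have hψ : HasMFDerivAt (IG.prod IB) 𝓘(ℂ, ℂ)
      ((fun b : B => f (1, b)) ∘ Prod.snd) (g, b)
      ((mfderiv IB 𝓘(ℂ, ℂ) (fun b : B => f (1, b)) b).comp
        (ContinuousLinearMap.snd ℂ (TangentSpace IG g) (TangentSpace IB b))) :=
    HasMFDerivAt.comp (x := (g, b)) (f := Prod.snd)
      ((hfbar b).mdifferentiableAt (by simp)).hasMFDerivAt (hasMFDerivAt_snd (g, b))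
  have hmul := hφ.mul hψ
  have hfeq : (((fun g : G => (χ g : ℂ)) ∘ Prod.fst) * ((fun b : B => f (1, b)) ∘ Prod.snd)) =
      f := by
    funext q
    obtain ⟨x, y⟩ := q
    simp only [Pi.mul_apply, Function.comp_apply]
    exact (hsemi x y).symm
  rw [hfeq] at hmul
  simp only [Function.comp_apply] at hmul
  -- `hmul : HasMFDerivAt ... f (g, b) (χ g • (D̄ ∘ snd) + f (1, b) • (Dχ ∘ fst))`
  constructor
  · -- forward direction
    intro hp
    have h0 : HasMFDerivAt (IG.prod IB) 𝓘(ℂ, ℂ) f (g, b) 0 := by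
      have := ((hf (g, b)).mdifferentiableAt (by simp)).hasMFDerivAt
      rwa [hp] at this
    -- the slice in the B direction
    have hinr : HasMFDerivAt IB (IG.prod IB) (fun y : B => (g, y)) b
        (ContinuousLinearMap.inr ℂ (TangentSpace IG g) (TangentSpace IB b)) := by
      have hm : MDifferentiableAt IB (IG.prod IB) (fun y : B => (g, y)) b :=
        MDifferentiableAt.prodMk mdifferentiableAt_const mdifferentiableAt_id
      have h := hm.hasMFDerivAt
      rwa [mfderiv_prod_right] at h
    have hBslice : HasMFDerivAt IB 𝓘(ℂ, ℂ) (fun y : B => f (g, y)) b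
        ((0 : TangentSpace (IG.prod IB) (g, b) →L[ℂ] TangentSpace 𝓘(ℂ, ℂ) (f (g, b))).comp
          (ContinuousLinearMap.inr ℂ (TangentSpace IG g) (TangentSpace IB b))) :=
      HasMFDerivAt.comp (x := b) (f := fun y : B => (g, y)) h0 hinr
    have hsemiB : (fun y : B => f (g, y)) = (χ g : ℂ) • (fun y : B => f (1, y)) := by
      funext y
      simp only [Pi.smul_apply, smul_eq_mul]
      exact hsemi g y
    have hBslice2 : HasMFDerivAt IB 𝓘(ℂ, ℂ) (fun y : B => f (g, y)) b
        ((χ g : ℂ) • mfderiv IB 𝓘(ℂ, ℂ) (fun y : B => f (1, y)) b) := by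
      have h := (((hfbar b).mdifferentiableAt (by simp)).hasMFDerivAt).const_smul ((χ g : ℂ))
      rwa [← hsemiB] at h
    have hBzero : (χ g : ℂ) • mfderiv IB 𝓘(ℂ, ℂ) (fun y : B => f (1, y)) b = 0 := by
      rw [← hasMFDerivAt_unique hBslice hBslice2]
      exact ContinuousLinearMap.zero_comp _
    have hB : mfderiv IB 𝓘(ℂ, ℂ) (fun y : B => f (1, y)) b = 0 := by
      have h3 := congrArg (fun L => ((χ g : ℂ))⁻¹ • L) hBzero
      simpa [smul_smul, inv_mul_cancel₀ (Units.ne_zero (χ g))] using h3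
    -- the slice in the G direction
    have hinl : HasMFDerivAt IG (IG.prod IB) (fun x : G => (x, b)) g
        (ContinuousLinearMap.inl ℂ (TangentSpace IG g) (TangentSpace IB b)) := by
      have hm : MDifferentiableAt IG (IG.prod IB) (fun x : G => (x, b)) g :=
        MDifferentiableAt.prodMk mdifferentiableAt_id mdifferentiableAt_const
      have h := hm.hasMFDerivAt
      rwa [mfderiv_prod_left] at h
    have hGslice : HasMFDerivAt IG 𝓘(ℂ, ℂ) (fun x : G => f (x, b)) g
        ((0 : TangentSpace (IG.prod IB) (g, b) →L[ℂ] TangentSpace 𝓘(ℂ, ℂ) (f (g, b))).comp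
          (ContinuousLinearMap.inl ℂ (TangentSpace IG g) (TangentSpace IB b))) :=
      HasMFDerivAt.comp (x := g) (f := fun x : G => (x, b)) h0 hinl
    have hsemiG : (fun x : G => f (x, b)) = f (1, b) • (fun g : G => (χ g : ℂ)) := by
      funext x
      simp only [Pi.smul_apply, smul_eq_mul]
      rw [hsemi x b, mul_comm]
    have hGslice2 : HasMFDerivAt IG 𝓘(ℂ, ℂ) (fun x : G => f (x, b)) g
        (f (1, b) • mfderiv IG 𝓘(ℂ, ℂ) (fun g : G => (χ g : ℂ)) g) := by
      have h := (((hχ g).mdifferentiableAt (by simp)).hasMFDerivAt).const_smul (f (1, b))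
      rwa [← hsemiG] at h
    have hGzero : f (1, b) • mfderiv IG 𝓘(ℂ, ℂ) (fun g : G => (χ g : ℂ)) g = 0 := by
      rw [← hasMFDerivAt_unique hGslice hGslice2]
      exact ContinuousLinearMap.zero_comp _
    have hG : f (1, b) = 0 := by
      by_contra hc
      have hDχ : mfderiv IG 𝓘(ℂ, ℂ) (fun g : G => (χ g : ℂ)) g = 0 := by
        have h3 := congrArg (fun L => (f (1, b))⁻¹ • L) hGzero
        simpa [smul_smul, inv_mul_cancel₀ hc] using h3
      have h1 : mfderiv IG 𝓘(ℂ, ℂ) (fun g : G => (χ g : ℂ)) (1 : G) = 0 :=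
        mfderiv_char_eq_zero_of_eq_zero χ hχ hDχ (1 : G)
      exact mfderiv_char_one_ne_zero χ hχ hnontriv h1
    exact ⟨hB, hG⟩
  · -- reverse direction
    rintro ⟨hd, hz⟩
    rw [hmul.mfderiv, hd, hz]
    ext v
    change (χ g : ℂ) * (0 : ℂ) + (0 : ℂ) * (show ℂ from mfderiv IG 𝓘(ℂ, ℂ) (fun g : G => (χ g : ℂ)) g v.1) = 0
    simp
    exact zero_mul _
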